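/- Let V be a real inner product space of dimension 2n, N an inner product space, and α: V × V → N a symmetric bilinear map. Suppose there exist a unit vector δ ∈ N, a J-invariant subspace L ⊆ V with dim L ≥ 2, and a map φ(X,Y) = α(X,Y) - ⟨A_δX,Y⟩δ (with ⟨A_δX,Y⟩ = ⟨α(X,Y),δ⟩) such that ⟨A_δ X, Z⟩ = ⟨X,Z⟩ for all X ∈ V, Z ∈ L, and φ(JZ,JZ) = -φ(Z,Z) for all Z ∈ L. Then for every unit vector Z ∈ L, the holomorphic sectional curvature computed via the Gauss equation with c = -1 equals K(Z,JZ) = -‖φ(Z,Z)‖² - ‖φ(Z,JZ)‖², hence K(Z,JZ) ≤ 0. -/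
import Mathlib


open scoped RealInnerProductSpace

/-- The (4,0)-curvature tensor `⟨R(X,Y)Z,W⟩` determined by the Gauss equation in a
space form of curvature `c`. -/
noncomputable def gaussR {V N : Type*} [NormedAddCommGroup V] [InnerProductSpace ℝ V]
    [NormedAddCommGroup N] [InnerProductSpace ℝ N]
    (c : ℝ) (α : V →ₗ[ℝ] V →ₗ[ℝ] N) (X Y Z W : V) : ℝ :=
  c * (⟪Y, Z⟫ * ⟪X, W⟫ - ⟪X, Z⟫ * ⟪Y, W⟫) + ⟪α X W, α Y Z⟫ - ⟪α X Z, α Y W⟫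

/-- the holomorphic sectional curvature formula
`K(Z,JZ) = -‖φ(Z,Z)‖² - ‖φ(Z,JZ)‖² ≤ 0`. -/
theorem stmt_6
    (V N : Type*) [NormedAddCommGroup V] [InnerProductSpace ℝ V] [FiniteDimensional ℝ V]
    [NormedAddCommGroup N] [InnerProductSpace ℝ N]
    (n : ℕ) (hV : Module.finrank ℝ V = 2 * n)
    (J : V →ₗ[ℝ] V) (hJ2 : ∀ X : V, J (J X) = -X)
    (hJorth : ∀ X Y : V, ⟪J X, J Y⟫ = ⟪X, Y⟫)
    (α : V →ₗ[ℝ] V →ₗ[ℝ] N) (hαsymm : ∀ X Y : V, α X Y = α Y X)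
    (δ : N) (hδ : ‖δ‖ = 1)
    (L : Submodule ℝ V) (hLJ : ∀ Z ∈ L, J Z ∈ L) (hLdim : 2 ≤ Module.finrank ℝ L)
    (φ : V → V → N) (hφ : ∀ X Y : V, φ X Y = α X Y - ⟪α X Y, δ⟫ • δ)
    (hAδ : ∀ X : V, ∀ Z ∈ L, ⟪α X Z, δ⟫ = ⟪X, Z⟫)
    (hanti : ∀ Z ∈ L, φ (J Z) (J Z) = -φ Z Z) :
    ∀ Z ∈ L, ‖Z‖ = 1 →
      gaussR (-1) α Z (J Z) (J Z) Z = -‖φ Z Z‖ ^ 2 - ‖φ Z (J Z)‖ ^ 2 ∧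
      gaussR (-1) α Z (J Z) (J Z) Z ≤ 0 := by
  intro Z hZ hZ1
  have hδ2 : ⟪δ, δ⟫ = 1 := by
    rw [real_inner_self_eq_norm_sq, hδ]; norm_num
  have hZZ : ⟪Z, Z⟫ = 1 := by rw [real_inner_self_eq_norm_sq, hZ1]; norm_num
  have hJZJZ : ⟪J Z, J Z⟫ = 1 := by rw [hJorth]; exact hZZ
  have hZJZ : ⟪Z, J Z⟫ = 0 := by
    have h := hJorth (J Z) Z
    rw [hJ2, inner_neg_left, real_inner_comm (J Z) Z] at h
    rw [real_inner_comm]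
    linarith
  have hφδ : ∀ X Y : V, ⟪φ X Y, δ⟫ = 0 := by
    intro X Y
    rw [hφ, inner_sub_left, real_inner_smul_left, hδ2]; ring
  have hαZZ : α Z Z = φ Z Z + δ := by
    rw [hφ, hAδ Z Z hZ, hZZ, one_smul]; abel
  have hαJJ : α (J Z) (J Z) = -φ Z Z + δ := by
    have := hφ (J Z) (J Z)
    rw [hanti Z hZ, hAδ (J Z) (J Z) (hLJ Z hZ), hJZJZ, one_smul] at this
    rw [this]; abel
  have hαZJ : α Z (J Z) = φ Z (J Z) := by
    rw [hφ, hAδ Z (J Z) (hLJ Z hZ), hZJZ, zero_smul, sub_zero]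
  have hαJZ : α (J Z) Z = φ Z (J Z) := by rw [hαsymm, hαZJ]
  have key : gaussR (-1) α Z (J Z) (J Z) Z = -‖φ Z Z‖ ^ 2 - ‖φ Z (J Z)‖ ^ 2 := by
    unfold gaussR
    rw [hαZZ, hαJJ, hαZJ, hαJZ, hZZ, hJZJZ, hZJZ]
    have hδφ : ⟪δ, φ Z Z⟫ = 0 := by rw [real_inner_comm]; exact hφδ Z Z
    rw [inner_add_left, inner_add_right, inner_add_right, inner_neg_right,
      inner_neg_right, hφδ, hδφ, hδ2,
      real_inner_self_eq_norm_sq, real_inner_self_eq_norm_sq]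
    ring
  refine ⟨key, ?_⟩
  rw [key]
  nlinarith [sq_nonneg ‖φ Z Z‖, sq_nonneg ‖φ Z (J Z)‖]
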